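/- The optimal alignment score L_{kn} of sequences of length kn equals the maximum over partitions: L_{kn} = max_{(ν,τ) ∈ ℬ_{k,n}} Σ_{j=1}^r L(X_{ν_j},...,X_{ν_{j+1}-1}; Y_{τ_j},...,Y_{τ_{j+1}-1}). -/

import Mathlib

open MeasureTheory ProbabilityTheory Real Filter

/-- Optimal alignment score of two sequences of the same length `m`,
with pairwise score `S` and gap price `δ` (a gap is a pair of indels). -/
noncomputable def alignScore {𝔸 : Type*} (S : 𝔸 → 𝔸 → ℝ) (δ : ℝ) {m : ℕ}
    (x y : Fin m → 𝔸) : ℝ :=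
  sSup {s : ℝ | ∃ (k : ℕ) (al : Fin k → Fin m) (mu : Fin k → Fin m),
    StrictMono al ∧ StrictMono mu ∧
    s = (∑ i, S (x (al i)) (y (mu i))) + δ * ((m : ℝ) - (k : ℝ))}

/-- Optimal alignment score for sequences of possibly different lengths `p`, `q`;
the gap count is `((p-k)+(q-k))/2`. -/
noncomputable def alignScore2 {𝔸 : Type*} (S : 𝔸 → 𝔸 → ℝ) (δ : ℝ) {p q : ℕ}
    (x : Fin p → 𝔸) (y : Fin q → 𝔸) : ℝ :=
  sSup {s : ℝ | ∃ (k : ℕ) (al : Fin k → Fin p) (mu : Fin k → Fin q),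
    StrictMono al ∧ StrictMono mu ∧
    s = (∑ i, S (x (al i)) (y (mu i))) +
      δ * ((((p : ℝ) - (k : ℝ)) + ((q : ℝ) - (k : ℝ))) / 2)}
/-- The set `ℬ^r_{k,n}` of `r`-partitions. -/
def PartSet (r k n : ℕ) : Set ((Fin (r + 1) → ℕ) × (Fin (r + 1) → ℕ)) :=
  {p | Monotone p.1 ∧ Monotone p.2 ∧ p.1 0 = 1 ∧ p.2 0 = 1 ∧
    p.1 (Fin.last r) = k * n + 1 ∧ p.2 (Fin.last r) = k * n + 1 ∧
    ∀ j : Fin r,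
      ((j : ℕ) + 1 < r →
        (p.1 j.succ - p.1 j.castSucc) + (p.2 j.succ - p.2 j.castSucc)
          ∈ ({2 * n - 1, 2 * n} : Set ℕ)) ∧
      ((j : ℕ) + 1 = r →
        (p.1 j.succ - p.1 j.castSucc) + (p.2 j.succ - p.2 j.castSucc) ≤ 2 * n)}

namespace AlignAux

variable {𝔸 : Type*}

def ASet (S : 𝔸 → 𝔸 → ℝ) (δ : ℝ) {p q : ℕ} (x : Fin p → 𝔸) (y : Fin q → 𝔸) : Set ℝ :=
  {s : ℝ | ∃ (k : ℕ) (al : Fin k → Fin p) (mu : Fin k → Fin q),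
    StrictMono al ∧ StrictMono mu ∧
    s = (∑ i, S (x (al i)) (y (mu i))) +
      δ * ((((p : ℝ) - (k : ℝ)) + ((q : ℝ) - (k : ℝ))) / 2)}

lemma alignScore2_eq_sSup (S : 𝔸 → 𝔸 → ℝ) (δ : ℝ) {p q : ℕ} (x : Fin p → 𝔸) (y : Fin q → 𝔸) :
    alignScore2 S δ x y = sSup (ASet S δ x y) := rfl

lemma ASet_nonempty (S : 𝔸 → 𝔸 → ℝ) (δ : ℝ) {p q : ℕ} (x : Fin p → 𝔸) (y : Fin q → 𝔸) :
    (ASet S δ x y).Nonempty :=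
  ⟨_, 0, Fin.elim0, Fin.elim0, (fun a => a.elim0), (fun a => a.elim0), rfl⟩

lemma ASet_finite (S : 𝔸 → 𝔸 → ℝ) (δ : ℝ) {p q : ℕ} (x : Fin p → 𝔸) (y : Fin q → 𝔸) :
    (ASet S δ x y).Finite := by
  classical
  have hsub : ASet S δ x y ⊆
      (fun c : Σ k : Fin (p+1), (Fin (k:ℕ) → Fin p) × (Fin (k:ℕ) → Fin q) =>
        (∑ i, S (x (c.2.1 i)) (y (c.2.2 i))) +
          δ * ((((p : ℝ) - (((c.1 : ℕ)) : ℝ)) + ((q : ℝ) - (((c.1 : ℕ)) : ℝ))) / 2)) ''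
        Set.univ := by
    rintro s ⟨k, al, mu, hal, hmu, rfl⟩
    have hk : k ≤ p := by simpa using Fintype.card_le_of_injective al hal.injective
    exact ⟨⟨⟨k, by omega⟩, al, mu⟩, trivial, rfl⟩
  exact (Set.finite_univ.image _).subset hsub

lemma mem_ASet_le {S : 𝔸 → 𝔸 → ℝ} {δ : ℝ} {p q : ℕ} {x : Fin p → 𝔸} {y : Fin q → 𝔸}
    {s : ℝ} (h : s ∈ ASet S δ x y) : s ≤ alignScore2 S δ x y :=
  le_csSup (ASet_finite S δ x y).bddAbove h

lemma alignScore2_mem (S : 𝔸 → 𝔸 → ℝ) (δ : ℝ) {p q : ℕ} (x : Fin p → 𝔸) (y : Fin q → 𝔸) :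
    alignScore2 S δ x y ∈ ASet S δ x y :=
  (ASet_nonempty S δ x y).csSup_mem (ASet_finite S δ x y)

lemma alignScore_eq_alignScore2 (S : 𝔸 → 𝔸 → ℝ) (δ : ℝ) {m : ℕ} (x y : Fin m → 𝔸) :
    alignScore S δ x y = alignScore2 S δ x y := by
  unfold alignScore alignScore2
  congr 1
  ext s
  refine exists_congr fun k => exists_congr fun al => exists_congr fun mu =>
    and_congr_right fun _ => and_congr_right fun _ => ?_
  rw [show δ * ((m : ℝ) - (k : ℝ)) =
    δ * ((((m : ℝ) - (k : ℝ)) + ((m : ℝ) - (k : ℝ))) / 2) by ring]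

noncomputable def Fsc (S : 𝔸 → 𝔸 → ℝ) (δ : ℝ) (x y : ℕ → 𝔸) (p q s t : ℕ) : ℝ :=
  alignScore2 S δ (fun i : Fin p => x (s + (i : ℕ))) (fun i : Fin q => y (t + (i : ℕ)))

lemma merge (S : 𝔸 → 𝔸 → ℝ) (δ : ℝ) (x y : ℕ → 𝔸) (p1 q1 p2 q2 s t : ℕ) :
    Fsc S δ x y p1 q1 s t + Fsc S δ x y p2 q2 (s + p1) (t + q1) ≤
      Fsc S δ x y (p1 + p2) (q1 + q2) s t := by
  obtain ⟨k1, al1, mu1, hal1, hmu1, e1⟩ := alignScore2_mem S δ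
    (fun i : Fin p1 => x (s + (i : ℕ))) (fun i : Fin q1 => y (t + (i : ℕ)))
  obtain ⟨k2, al2, mu2, hal2, hmu2, e2⟩ := alignScore2_mem S δ
    (fun i : Fin p2 => x (s + p1 + (i : ℕ))) (fun i : Fin q2 => y (t + q1 + (i : ℕ)))
  classical
  set al : Fin (k1 + k2) → Fin (p1 + p2) := fun i =>
    if h : (i : ℕ) < k1 then ⟨al1 ⟨i, h⟩, by have := (al1 ⟨i, h⟩).isLt; omega⟩
    else ⟨p1 + al2 ⟨(i : ℕ) - k1, by have := i.isLt; omega⟩,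
      by have := (al2 ⟨(i : ℕ) - k1, by have := i.isLt; omega⟩).isLt; omega⟩ with hal_def
  set mu : Fin (k1 + k2) → Fin (q1 + q2) := fun i =>
    if h : (i : ℕ) < k1 then ⟨mu1 ⟨i, h⟩, by have := (mu1 ⟨i, h⟩).isLt; omega⟩
    else ⟨q1 + mu2 ⟨(i : ℕ) - k1, by have := i.isLt; omega⟩,
      by have := (mu2 ⟨(i : ℕ) - k1, by have := i.isLt; omega⟩).isLt; omega⟩ with hmu_def
  have hal : StrictMono al := by
    intro i j hij
    have hij' : (i : ℕ) < (j : ℕ) := hij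
    simp only [hal_def, Fin.lt_def]
    split_ifs with h1 h2 h2
    · exact hal1 (show (⟨i, h1⟩ : Fin k1) < ⟨j, h2⟩ from hij')
    · have := (al1 ⟨i, h1⟩).isLt; simpa using by omega
    · omega
    · have : (⟨(i:ℕ) - k1, by have := i.isLt; omega⟩ : Fin k2) <
          ⟨(j:ℕ) - k1, by have := j.isLt; omega⟩ := by
        simp only [Fin.lt_def]; omega
      have := hal2 this
      simpa using by omega
  have hmu : StrictMono mu := by
    intro i j hij
    have hij' : (i : ℕ) < (j : ℕ) := hij
    simp only [hmu_def, Fin.lt_def]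
    split_ifs with h1 h2 h2
    · exact hmu1 (show (⟨i, h1⟩ : Fin k1) < ⟨j, h2⟩ from hij')
    · have := (mu1 ⟨i, h1⟩).isLt; simpa using by omega
    · omega
    · have : (⟨(i:ℕ) - k1, by have := i.isLt; omega⟩ : Fin k2) <
          ⟨(j:ℕ) - k1, by have := j.isLt; omega⟩ := by
        simp only [Fin.lt_def]; omega
      have := hmu2 this
      simpa using by omega
  have hsum : ∑ i : Fin (k1 + k2),
      S (x (s + ((al i : ℕ)))) (y (t + ((mu i : ℕ)))) =
      (∑ i : Fin k1, S (x (s + (al1 i : ℕ))) (y (t + (mu1 i : ℕ)))) +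
      ∑ i : Fin k2, S (x (s + p1 + (al2 i : ℕ))) (y (t + q1 + (mu2 i : ℕ))) := by
    rw [Fin.sum_univ_add]
    congr 1
    · apply Finset.sum_congr rfl
      intro i _
      have h : ((Fin.castAdd k2 i : Fin (k1+k2)) : ℕ) < k1 := by simpa using i.isLt
      have hidx : (⟨((Fin.castAdd k2 i : Fin (k1+k2)) : ℕ), h⟩ : Fin k1) = i :=
        Fin.ext (by simp)
      have hv1 : ((al (Fin.castAdd k2 i)) : ℕ) = ((al1 i : ℕ)) := by
        simp only [hal_def, dif_pos h]
        exact congrArg Fin.val (congrArg al1 hidx)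
      have hv2 : ((mu (Fin.castAdd k2 i)) : ℕ) = ((mu1 i : ℕ)) := by
        simp only [hmu_def, dif_pos h]
        exact congrArg Fin.val (congrArg mu1 hidx)
      rw [hv1, hv2]
    · apply Finset.sum_congr rfl
      intro i _
      have h : ¬ ((Fin.natAdd k1 i : Fin (k1+k2)) : ℕ) < k1 := by simp
      have pf : ((Fin.natAdd k1 i : Fin (k1+k2)) : ℕ) - k1 < k2 := by
        simpa using i.isLt
      have hidx : (⟨((Fin.natAdd k1 i : Fin (k1+k2)) : ℕ) - k1, pf⟩ : Fin k2) = i :=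
        Fin.ext (by simp)
      have hv1 : ((al (Fin.natAdd k1 i)) : ℕ) = p1 + ((al2 i : ℕ)) := by
        simp only [hal_def, dif_neg h]
        exact congrArg (p1 + ·) (congrArg Fin.val (congrArg al2 hidx))
      have hv2 : ((mu (Fin.natAdd k1 i)) : ℕ) = q1 + ((mu2 i : ℕ)) := by
        simp only [hmu_def, dif_neg h]
        exact congrArg (q1 + ·) (congrArg Fin.val (congrArg mu2 hidx))
      rw [hv1, hv2]
      simp [add_assoc]
  apply mem_ASet_le
  refine ⟨k1 + k2, al, mu, hal, hmu, ?_⟩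
  have key : Fsc S δ x y p1 q1 s t + Fsc S δ x y p2 q2 (s + p1) (t + q1) =
      (∑ i : Fin (k1 + k2), S (x (s + ((al i : ℕ)))) (y (t + ((mu i : ℕ))))) +
      δ * (((((p1 + p2 : ℕ)) : ℝ) - (((k1 + k2 : ℕ)) : ℝ) +
        ((((q1 + q2 : ℕ)) : ℝ) - (((k1 + k2 : ℕ)) : ℝ))) / 2) := by
    rw [hsum]
    unfold Fsc
    rw [e1, e2]
    push_cast
    ring
  exact key

lemma fsc_zero_le (S : 𝔸 → 𝔸 → ℝ) (δ : ℝ) (x y : ℕ → 𝔸) (s t : ℕ) :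
    0 ≤ Fsc S δ x y 0 0 s t := by
  apply mem_ASet_le
  refine ⟨0, Fin.elim0, Fin.elim0, (fun a => a.elim0), (fun a => a.elim0), ?_⟩
  simp

lemma chain (S : 𝔸 → 𝔸 → ℝ) (δ : ℝ) (x y : ℕ → 𝔸) (ν τ : ℕ → ℕ)
    (hν : Monotone ν) (hτ : Monotone τ) (r : ℕ) :
    ∑ j ∈ Finset.range r, Fsc S δ x y (ν (j+1) - ν j) (τ (j+1) - τ j) (ν j) (τ j) ≤
      Fsc S δ x y (ν r - ν 0) (τ r - τ 0) (ν 0) (τ 0) := by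
  induction r with
  | zero => simpa using fsc_zero_le S δ x y (ν 0) (τ 0)
  | succ r ih =>
    rw [Finset.sum_range_succ]
    have hm1 := hν (Nat.zero_le r)
    have hm2 := hτ (Nat.zero_le r)
    have hm3 := hν (show r ≤ r + 1 by omega)
    have hm4 := hτ (show r ≤ r + 1 by omega)
    have h1 : ν r = ν 0 + (ν r - ν 0) := by omega
    have h2 : τ r = τ 0 + (τ r - τ 0) := by omega
    have hm := merge S δ x y (ν r - ν 0) (τ r - τ 0) (ν (r+1) - ν r) (τ (r+1) - τ r) (ν 0) (τ 0)
    rw [← h1, ← h2] at hm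
    have h3 : (ν r - ν 0) + (ν (r+1) - ν r) = ν (r+1) - ν 0 := by omega
    have h4 : (τ r - τ 0) + (τ (r+1) - τ r) = τ (r+1) - τ 0 := by omega
    rw [h3, h4] at hm
    exact le_trans (add_le_add_left ih _) hm

/-! ### Index machinery for splitting an alignment -/

noncomputable def fIdx (α : ℕ → ℕ) (a : ℕ) : ℕ := sInf {i | a ≤ α i}

section Idx

variable {α β : ℕ → ℕ} {m K : ℕ}

lemma fIdx_set_nonempty (hα : StrictMono α) (a : ℕ) : {i | a ≤ α i}.Nonempty :=
  ⟨a, hα.le_apply⟩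

lemma fIdx_le (hα : StrictMono α) {a j : ℕ} (h : a ≤ α j) : fIdx α a ≤ j :=
  Nat.sInf_le h

lemma le_alpha_fIdx (hα : StrictMono α) (a : ℕ) : a ≤ α (fIdx α a) :=
  Nat.sInf_mem (fIdx_set_nonempty hα a)

lemma lt_fIdx_iff (hα : StrictMono α) {a i : ℕ} : i < fIdx α a ↔ α i < a := by
  constructor
  · intro h
    have h2 := Nat.notMem_of_lt_sInf (show i < sInf {i | a ≤ α i} from h)
    simp only [Set.mem_setOf_eq] at h2
    omega
  · intro h
    by_contra hc
    push_neg at hc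
    have := hα.monotone hc
    have := le_alpha_fIdx hα a
    omega

lemma fIdx_mono (hα : StrictMono α) : Monotone (fIdx α) := by
  intro a b hab
  exact Nat.sInf_le (le_trans hab (le_alpha_fIdx hα b))

lemma fIdx_zero (hα : StrictMono α) : fIdx α 0 = 0 :=
  Nat.le_zero.mp (fIdx_le hα (Nat.zero_le _))

lemma fIdx_succ_le (hα : StrictMono α) (a : ℕ) : fIdx α (a + 1) ≤ fIdx α a + 1 := by
  apply fIdx_le hα
  have h1 := le_alpha_fIdx hα a
  have h2 := hα (show fIdx α a < fIdx α a + 1 by omega)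
  omega

variable (hα : StrictMono α) (hβ : StrictMono β)
  (hαm : ∀ i, α i < m ↔ i < K) (hβm : ∀ i, β i < m ↔ i < K)

include hα hαm in
lemma fIdx_le_K {a : ℕ} (ha : a ≤ m) : fIdx α a ≤ K := by
  apply fIdx_le hα
  have := hαm K
  omega

include hα hαm in
lemma fIdx_m : fIdx α m = K := by
  refine le_antisymm (fIdx_le_K hα hαm le_rfl) ?_
  by_contra hc
  push_neg at hc
  have h1 := le_alpha_fIdx hα m
  have h2 := (hαm (fIdx α m)).mpr hc
  omega

end Idx

/-- Lowest admissible `b` for a cut at `a`. -/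
noncomputable def blo (α β : ℕ → ℕ) (a : ℕ) : ℕ :=
  if fIdx α a = 0 then 0 else β (fIdx α a - 1) + 1

/-- Highest admissible `b` for a cut at `a`. -/
noncomputable def bhi (m : ℕ) (α β : ℕ → ℕ) (a : ℕ) : ℕ := min (β (fIdx α a)) m

section BloBhi

variable {α β : ℕ → ℕ} {m K : ℕ}
  (hα : StrictMono α) (hβ : StrictMono β)
  (hαm : ∀ i, α i < m ↔ i < K) (hβm : ∀ i, β i < m ↔ i < K)

include hα hβ in
lemma blo_mono : Monotone (blo α β) := by
  intro a b hab
  unfold blo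
  have hf := fIdx_mono hα hab
  split_ifs with h1 h2 h2
  · omega
  · omega
  · omega
  · have := hβ.monotone (show fIdx α a - 1 ≤ fIdx α b - 1 by omega)
    omega

include hα hβ in
lemma bhi_mono : Monotone (bhi m α β) := by
  intro a b hab
  unfold bhi
  have := hβ.monotone (fIdx_mono hα hab)
  omega

include hα hβ hαm hβm in
lemma blo_le_bhi {a : ℕ} (ha : a ≤ m) : blo α β a ≤ bhi m α β a := by
  unfold blo bhi
  split_ifs with h1
  · omega
  · have hK := fIdx_le_K hα hαm ha
    have h2 := hβ (show fIdx α a - 1 < fIdx α a by omega)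
    have h3 := (hβm (fIdx α a - 1)).mpr (by omega)
    omega

include hα hβ hαm hβm in
lemma blo_le_m {a : ℕ} (ha : a ≤ m) : blo α β a ≤ m := by
  unfold blo
  split_ifs with h1
  · omega
  · have hK := fIdx_le_K hα hαm ha
    have h3 := (hβm (fIdx α a - 1)).mpr (by omega)
    omega

include hα hβ hαm hβm in
lemma blo_staircase {a : ℕ} (ha : a < m) :
    blo α β (a + 1) ≤ bhi m α β a + 1 := by
  have hf1 := fIdx_mono hα (show a ≤ a + 1 by omega)
  have hf2 := fIdx_succ_le hα a
  rcases (show fIdx α (a+1) = fIdx α a ∨ fIdx α (a+1) = fIdx α a + 1 by omega) with h | h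
  · have := blo_le_bhi hα hβ hαm hβm (le_of_lt ha)
    unfold blo at *
    rw [h]
    omega
  · have hK : fIdx α (a+1) ≤ K := fIdx_le_K hα hαm (by omega)
    have hfaK : fIdx α a < K := by omega
    have hb : β (fIdx α a) < m := (hβm _).mpr hfaK
    unfold blo bhi
    rw [h, if_neg (by omega)]
    simp only [Nat.add_sub_cancel]
    omega

end BloBhi

/-! ### The canonical monotone cut -/

noncomputable def a1 (m : ℕ) (α β : ℕ → ℕ) (s : ℕ) : ℕ :=
  Nat.findGreatest (fun a => a + blo α β a ≤ s) m

noncomputable def b1 (m : ℕ) (α β : ℕ → ℕ) (s : ℕ) : ℕ :=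
  min (s - a1 m α β s) (bhi m α β (a1 m α β s))

noncomputable def sg (m : ℕ) (α β : ℕ → ℕ) (s : ℕ) : ℕ :=
  a1 m α β s + b1 m α β s

section Cut

variable {α β : ℕ → ℕ} {m K : ℕ}
  (hα : StrictMono α) (hβ : StrictMono β)
  (hαm : ∀ i, α i < m ↔ i < K) (hβm : ∀ i, β i < m ↔ i < K)

include hα in
lemma blo_zero : blo α β 0 = 0 := by
  unfold blo
  rw [if_pos (fIdx_zero hα)]

lemma a1_le_m (s : ℕ) : a1 m α β s ≤ m := Nat.findGreatest_le m

include hα in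
lemma a1_spec (s : ℕ) : a1 m α β s + blo α β (a1 m α β s) ≤ s := by
  classical
  have h0 : (0 : ℕ) + blo α β 0 ≤ s := by
    have := blo_zero (β := β) hα
    omega
  exact Nat.findGreatest_spec (P := fun a => a + blo α β a ≤ s) (Nat.zero_le m) h0

lemma a1_max {s a : ℕ} (h1 : a1 m α β s < a) (h2 : a ≤ m) :
    s < a + blo α β a := by
  classical
  have h := Nat.findGreatest_is_greatest h1 h2
  simp only [not_le] at h
  omega

lemma a1_mono : Monotone (a1 m α β) := by
  intro s s' hss
  classical
  exact Nat.findGreatest_mono (fun a h => le_trans h hss) le_rfl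

include hα hβ hαm hβm in
lemma blo_le_b1 (s : ℕ) : blo α β (a1 m α β s) ≤ b1 m α β s := by
  have h1 := a1_spec hα (α := α) (β := β) (m := m) s
  have h2 := blo_le_bhi hα hβ hαm hβm (a1_le_m (m := m) (α := α) (β := β) s)
  unfold b1
  omega

include hα hβ hαm hβm in
lemma blo_succ_cases {a : ℕ} (ha : a < m) :
    blo α β (a + 1) = blo α β a ∨
      (blo α β (a + 1) = bhi m α β a + 1) := by
  have hf1 := fIdx_mono hα (show a ≤ a + 1 by omega)
  have hf2 := fIdx_succ_le hα a
  rcases (show fIdx α (a+1) = fIdx α a ∨ fIdx α (a+1) = fIdx α a + 1 by omega) with h | h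
  · left; unfold blo; rw [h]
  · right
    have hK : fIdx α (a+1) ≤ K := fIdx_le_K hα hαm (by omega)
    have hfaK : fIdx α a < K := by omega
    have hb : β (fIdx α a) < m := (hβm _).mpr hfaK
    unfold blo bhi
    rw [h, if_neg (by omega)]
    simp only [Nat.add_sub_cancel]
    omega

include hα hβ hαm hβm in
lemma b1_mono {s s' : ℕ} (hss : s ≤ s') : b1 m α β s ≤ b1 m α β s' := by
  have hA : a1 m α β s ≤ a1 m α β s' := a1_mono hss
  rcases eq_or_lt_of_le hA with heq | hlt
  · unfold b1
    rw [heq]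
    omega
  · by_cases hcase : b1 m α β s ≤ blo α β (a1 m α β s')
    · exact le_trans hcase (blo_le_b1 hα hβ hαm hβm s')
    · exfalso
      push_neg at hcase
      have ham : a1 m α β s + 1 ≤ m := le_trans hlt (a1_le_m s')
      have hblo1 : blo α β (a1 m α β s + 1) ≤ blo α β (a1 m α β s') :=
        blo_mono hα hβ (by omega)
      rcases blo_succ_cases hα hβ hαm hβm (show a1 m α β s < m by omega) with h | h
      · have hmax := a1_max (m := m) (α := α) (β := β)
          (show a1 m α β s < a1 m α β s + 1 by omega) ham
        rw [h] at hmax hblo1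
        unfold b1 at hcase
        omega
      · rw [h] at hblo1
        unfold b1 at hcase
        omega

include hα hβ in
lemma sg_le (s : ℕ) : sg m α β s ≤ s := by
  have h1 := a1_spec hα (α := α) (β := β) (m := m) s
  unfold sg b1
  omega

include hα hβ hαm hβm in
lemma sg_ge {s : ℕ} (hs : s ≤ 2 * m) : s ≤ sg m α β s + 1 := by
  have h1 := a1_spec hα (α := α) (β := β) (m := m) s
  have h2 := a1_le_m (m := m) (α := α) (β := β) s
  set a := a1 m α β s with hadef
  by_cases hc : s - a ≤ bhi m α β a
  · unfold sg b1
    rw [← hadef]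
    omega
  · push_neg at hc
    have ham : a < m := by
      by_contra hm
      have ham : a = m := by omega
      have hfm : fIdx α m = K := fIdx_m hα hαm
      have hbK : ¬ β K < m := by rw [hβm]; omega
      have : bhi m α β a = m := by unfold bhi; rw [ham, hfm]; omega
      omega
    have hmax := a1_max (m := m) (α := α) (β := β) (show a1 m α β s < a + 1 by omega) (by omega)
    have hst := blo_staircase hα hβ hαm hβm ham
    unfold sg b1
    rw [← hadef]
    omega

include hα hβ in
lemma a1_zero : a1 m α β 0 = 0 := by
  have := a1_spec hα (α := α) (β := β) (m := m) 0
  omega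

include hα hβ in
lemma sg_zero : sg m α β 0 = 0 := by
  have := sg_le hα hβ (m := m) (α := α) (β := β) 0
  omega

include hα hβ hαm hβm in
lemma a1_2m : a1 m α β (2 * m) = m := by
  classical
  refine le_antisymm (a1_le_m _) (Nat.le_findGreatest le_rfl ?_)
  have := blo_le_m hα hβ hαm hβm (le_refl m)
  omega

include hα hβ hαm hβm in
lemma b1_2m : b1 m α β (2 * m) = m := by
  have ha := a1_2m hα hβ hαm hβm
  have hfm : fIdx α m = K := fIdx_m hα hαm
  have hbK : ¬ β K < m := by rw [hβm]; omega
  have hbhi : bhi m α β m = m := by unfold bhi; rw [hfm]; omega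
  unfold b1
  rw [ha, hbhi]
  omega

include hα hβ hαm hβm in
lemma sg_2m : sg m α β (2 * m) = 2 * m := by
  unfold sg
  rw [a1_2m hα hβ hαm hβm, b1_2m hα hβ hαm hβm]
  omega

end Cut

/-! ### Splitting a global alignment along cuts -/

lemma sum_Ico_chain {M : Type*} [AddCommMonoid M] (G : ℕ → M) (F : ℕ → ℕ)
    (hF : Monotone F) (r : ℕ) :
    ∑ j ∈ Finset.range r, ∑ i ∈ Finset.Ico (F j) (F (j+1)), G i
      = ∑ i ∈ Finset.Ico (F 0) (F r), G i := by
  induction r with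
  | zero => simp
  | succ r ih =>
    rw [Finset.sum_range_succ, ih,
      Finset.sum_Ico_consecutive G (hF (Nat.zero_le r)) (hF (Nat.le_succ r))]

lemma blocks_le (S : 𝔸 → 𝔸 → ℝ) (δ : ℝ) (x y : ℕ → 𝔸) {m K : ℕ} {α β : ℕ → ℕ}
    (hα : StrictMono α) (hβ : StrictMono β)
    (hαm : ∀ i, α i < m ↔ i < K) (hβm : ∀ i, β i < m ↔ i < K)
    (A B : ℕ → ℕ) (r : ℕ)
    (hAmono : Monotone A) (hBmono : Monotone B)
    (hAm : ∀ j, A j ≤ m)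
    (hA0 : A 0 = 0) (hB0 : B 0 = 0) (hAr : A r = m) (hBr : B r = m)
    (hlo : ∀ j, blo α β (A j) ≤ B j) (hhi : ∀ j, B j ≤ bhi m α β (A j)) :
    (∑ i ∈ Finset.range K, (if i < K then S (x (1 + α i)) (y (1 + β i)) else 0)) +
      δ * (((m : ℝ) - (K : ℝ) + ((m : ℝ) - (K : ℝ))) / 2) ≤
    ∑ j ∈ Finset.range r,
      Fsc S δ x y (A (j+1) - A j) (B (j+1) - B j) (A j + 1) (B j + 1) := by
  classical
  set G : ℕ → ℝ := fun i => if i < K then S (x (1 + α i)) (y (1 + β i)) else 0 with hG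
  set F : ℕ → ℕ := fun j => fIdx α (A j) with hF
  have hFmono : Monotone F := fun j j' h => fIdx_mono hα (hAmono h)
  have hFdef : ∀ j, fIdx α (A j) = F j := fun _ => rfl
  have hFK : ∀ j, F j ≤ K := fun j => fIdx_le_K hα hαm (hAm j)
  have hF0 : F 0 = 0 := by rw [hF]; simp only [hA0]; exact fIdx_zero hα
  have hFr : F r = K := by rw [hF]; simp only [hAr]; exact fIdx_m hα hαm
  -- the three key position facts
  have hup : ∀ j (t : ℕ), F j + t < F (j+1) → α (F j + t) < A (j+1) := by
    intro j t ht
    exact (lt_fIdx_iff hα).mp ht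
  have hlow : ∀ j (t : ℕ), A j ≤ α (F j + t) := by
    intro j t
    by_contra hc
    push_neg at hc
    have h2 := (lt_fIdx_iff hα).mpr hc
    rw [hFdef] at h2
    omega
  have hbup : ∀ j (t : ℕ), F j + t < F (j+1) → β (F j + t) < B (j+1) := by
    intro j t ht
    have hFnz : F (j+1) ≠ 0 := by omega
    have hblo : blo α β (A (j+1)) = β (F (j+1) - 1) + 1 := by
      unfold blo
      rw [hFdef, if_neg hFnz]
    have hβle : β (F j + t) ≤ β (F (j+1) - 1) := hβ.monotone (by omega)
    have := hlo (j+1)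
    omega
  have hblow : ∀ j (t : ℕ), B j ≤ β (F j + t) := by
    intro j t
    have h := hhi j
    have h2 : β (F j) ≤ β (F j + t) := hβ.monotone (by omega)
    unfold bhi at h
    rw [hFdef] at h
    omega
  -- blockwise membership
  have hmem : ∀ j,
      (∑ t ∈ Finset.range (F (j+1) - F j), G (F j + t)) +
        δ * ((((A (j+1) - A j : ℕ) : ℝ) - ((F (j+1) - F j : ℕ) : ℝ) +
          (((B (j+1) - B j : ℕ) : ℝ) - ((F (j+1) - F j : ℕ) : ℝ))) / 2) ≤
      Fsc S δ x y (A (j+1) - A j) (B (j+1) - B j) (A j + 1) (B j + 1) := by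
    intro j
    apply mem_ASet_le
    refine ⟨F (j+1) - F j,
      (fun t => ⟨α (F j + ↑t) - A j, by
        have h1 := hup j ↑t (by have := t.isLt; omega)
        have h2 := hlow j ↑t
        omega⟩),
      (fun t => ⟨β (F j + ↑t) - B j, by
        have h1 := hbup j ↑t (by have := t.isLt; omega)
        have h2 := hblow j ↑t
        omega⟩), ?_, ?_, ?_⟩
    · intro t t' htt
      have h1 := hlow j (↑t : ℕ)
      have h2 := hlow j (↑t' : ℕ)
      have h3 := hα (show F j + (↑t : ℕ) < F j + ↑t' from by
        have : (↑t : ℕ) < ↑t' := htt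
        omega)
      simp only [Fin.lt_def]
      omega
    · intro t t' htt
      have h1 := hblow j (↑t : ℕ)
      have h2 := hblow j (↑t' : ℕ)
      have h3 := hβ (show F j + (↑t : ℕ) < F j + ↑t' from by
        have : (↑t : ℕ) < ↑t' := htt
        omega)
      simp only [Fin.lt_def]
      omega
    · congr 1
      rw [← Fin.sum_univ_eq_sum_range (fun t => G (F j + t)) (F (j+1) - F j)]
      apply Finset.sum_congr rfl
      intro t _
      have hiK : F j + ↑t < K := by
        have := t.isLt
        have := hFK (j+1)
        omega
      have e1 : (A j + 1) + (α (F j + ↑t) - A j) = 1 + α (F j + ↑t) := by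
        have := hlow j ↑t
        omega
      have e2 : (B j + 1) + (β (F j + ↑t) - B j) = 1 + β (F j + ↑t) := by
        have := hblow j ↑t
        omega
      rw [hG]
      simp only [if_pos hiK]
      rw [e1, e2]
  -- sum of the match parts
  have ematch : ∑ i ∈ Finset.range K, G i =
      ∑ j ∈ Finset.range r, ∑ t ∈ Finset.range (F (j+1) - F j), G (F j + t) := by
    have h1 : ∀ j, ∑ i ∈ Finset.Ico (F j) (F (j+1)), G i
        = ∑ t ∈ Finset.range (F (j+1) - F j), G (F j + t) :=
      fun j => Finset.sum_Ico_eq_sum_range G (F j) (F (j+1))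
    rw [← Finset.sum_congr rfl (fun j _ => h1 j), sum_Ico_chain G F hFmono r, hF0, hFr]
    rw [← Nat.Ico_zero_eq_range]
  -- sum of the gap parts
  have egap : ∑ j ∈ Finset.range r,
      δ * ((((A (j+1) - A j : ℕ) : ℝ) - ((F (j+1) - F j : ℕ) : ℝ) +
        (((B (j+1) - B j : ℕ) : ℝ) - ((F (j+1) - F j : ℕ) : ℝ))) / 2)
      = δ * (((m : ℝ) - (K : ℝ) + ((m : ℝ) - (K : ℝ))) / 2) := by
    set Hf : ℕ → ℝ := fun j => δ * ((((A j : ℕ) : ℝ) - ((F j : ℕ) : ℝ) +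
        (((B j : ℕ) : ℝ) - ((F j : ℕ) : ℝ))) / 2) with hHf
    have hsummand : ∀ j ∈ Finset.range r,
        δ * ((((A (j+1) - A j : ℕ) : ℝ) - ((F (j+1) - F j : ℕ) : ℝ) +
          (((B (j+1) - B j : ℕ) : ℝ) - ((F (j+1) - F j : ℕ) : ℝ))) / 2)
        = Hf (j+1) - Hf j := by
      intro j _
      rw [hHf]
      simp only
      rw [Nat.cast_sub (hAmono (Nat.le_succ j)), Nat.cast_sub (hBmono (Nat.le_succ j)),
        Nat.cast_sub (hFmono (Nat.le_succ j))]
      ring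
    rw [Finset.sum_congr rfl hsummand, Finset.sum_range_sub Hf r, hHf]
    simp only [hA0, hB0, hF0, hAr, hBr, hFr]
    push_cast
    ring
  calc (∑ i ∈ Finset.range K, G i) + δ * (((m : ℝ) - (K : ℝ) + ((m : ℝ) - (K : ℝ))) / 2)
      = ∑ j ∈ Finset.range r,
          ((∑ t ∈ Finset.range (F (j+1) - F j), G (F j + t)) +
            δ * ((((A (j+1) - A j : ℕ) : ℝ) - ((F (j+1) - F j : ℕ) : ℝ) +
              (((B (j+1) - B j : ℕ) : ℝ) - ((F (j+1) - F j : ℕ) : ℝ))) / 2)) := by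
        rw [Finset.sum_add_distrib, ← ematch, egap]
    _ ≤ _ := Finset.sum_le_sum (fun j _ => hmem j)

/-! ### The sequence of cut levels -/

noncomputable def useq (m n : ℕ) (α β : ℕ → ℕ) : ℕ → ℕ
  | 0 => 0
  | j + 1 =>
    if 2 * m ≤ sg m α β (useq m n α β j) + 2 * n then 2 * m
    else sg m α β (useq m n α β j) + 2 * n

section Useq

variable {α β : ℕ → ℕ} {m K n : ℕ}
  (hα : StrictMono α) (hβ : StrictMono β)
  (hαm : ∀ i, α i < m ↔ i < K) (hβm : ∀ i, β i < m ↔ i < K)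
  (hn : 1 ≤ n)

lemma useq_le_2m : ∀ j, useq m n α β j ≤ 2 * m := by
  intro j
  cases j with
  | zero => simp [useq]
  | succ j =>
    show (if 2 * m ≤ sg m α β (useq m n α β j) + 2 * n then 2 * m
      else sg m α β (useq m n α β j) + 2 * n) ≤ 2 * m
    split_ifs with h
    · omega
    · omega

include hα hβ hαm hβm hn in
lemma useq_mono : Monotone (useq m n α β) := by
  apply monotone_nat_of_le_succ
  intro j
  have h1 := sg_ge hα hβ hαm hβm (useq_le_2m (α := α) (β := β) (n := n) j)
  show useq m n α β j ≤ (if 2 * m ≤ sg m α β (useq m n α β j) + 2 * n then 2 * m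
      else sg m α β (useq m n α β j) + 2 * n)
  split_ifs with h
  · have := useq_le_2m (α := α) (β := β) (m := m) (n := n) j
    omega
  · omega

include hα hβ hαm hβm hn in
lemma useq_hits : ∃ j, useq m n α β j = 2 * m := by
  have key : ∀ j, useq m n α β j = 2 * m ∨ j ≤ useq m n α β j := by
    intro j
    induction j with
    | zero => right; omega
    | succ j ih =>
      have h1 := sg_ge hα hβ hαm hβm (useq_le_2m (α := α) (β := β) (n := n) j)
      have h2 := useq_le_2m (α := α) (β := β) (m := m) (n := n) j
      rcases ih with h | h
      · left
        have hsg : sg m α β (useq m n α β j) = 2 * m := by rw [h]; exact sg_2m hα hβ hαm hβm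
        show (if 2 * m ≤ sg m α β (useq m n α β j) + 2 * n then 2 * m
          else sg m α β (useq m n α β j) + 2 * n) = 2 * m
        rw [hsg, if_pos (by omega)]
      · show (if 2 * m ≤ sg m α β (useq m n α β j) + 2 * n then 2 * m
          else sg m α β (useq m n α β j) + 2 * n) = 2 * m ∨ j + 1 ≤
          (if 2 * m ≤ sg m α β (useq m n α β j) + 2 * n then 2 * m
          else sg m α β (useq m n α β j) + 2 * n)
        split_ifs with hcond
        · left; rfl
        · right; omega
  rcases key (2 * m) with h | h
  · exact ⟨2 * m, h⟩
  · exact ⟨2 * m, le_antisymm (useq_le_2m _) h⟩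

end Useq

lemma exists_partition (S : 𝔸 → 𝔸 → ℝ) (δ : ℝ) (x y : ℕ → 𝔸)
    (k n K : ℕ) (hk : 1 ≤ k) (hn : 1 ≤ n) {α β : ℕ → ℕ}
    (hα : StrictMono α) (hβ : StrictMono β)
    (hαm : ∀ i, α i < k * n ↔ i < K) (hβm : ∀ i, β i < k * n ↔ i < K) :
    ∃ r : ℕ, k ≤ r ∧ r ≤ Nat.ceil ((2 * (k : ℚ) * n) / (2 * (n : ℚ) - 1)) ∧
    ∃ p ∈ PartSet r k n,
      (∑ i ∈ Finset.range K, (if i < K then S (x (1 + α i)) (y (1 + β i)) else 0)) +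
        δ * ((((k * n : ℕ) : ℝ) - (K : ℝ) + (((k * n : ℕ) : ℝ) - (K : ℝ))) / 2) ≤
      ∑ j : Fin r, Fsc S δ x y (p.1 j.succ - p.1 j.castSucc) (p.2 j.succ - p.2 j.castSucc)
        (p.1 j.castSucc) (p.2 j.castSucc) := by
  classical
  set m := k * n with hm
  have hm1 : 1 ≤ m := by
    rw [hm]; exact Nat.one_le_iff_ne_zero.mpr (by positivity)
  have hex := useq_hits hα hβ hαm hβm hn
  set r := Nat.find hex with hrdef
  have hur : useq m n α β r = 2 * m := Nat.find_spec hex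
  have hpre : ∀ j, j < r → useq m n α β j ≠ 2 * m := by
    intro j hj
    rw [hrdef] at hj
    exact Nat.find_min hex hj
  have hr1 : 1 ≤ r := by
    by_contra hc
    have h0 : r = 0 := by omega
    rw [h0] at hur
    have : useq m n α β 0 = 0 := rfl
    omega
  have humono := useq_mono hα hβ hαm hβm hn
  have hu2m : ∀ j, useq m n α β j ≤ 2 * m := useq_le_2m
  have hsgle : ∀ s, sg m α β s ≤ s := sg_le hα hβ
  have hsgge : ∀ s, s ≤ 2 * m → s ≤ sg m α β s + 1 := fun s hs => sg_ge hα hβ hαm hβm hs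
  have hsgzero : sg m α β (useq m n α β 0) = 0 := sg_zero hα hβ
  have hsgr : sg m α β (useq m n α β r) = 2 * m := by rw [hur]; exact sg_2m hα hβ hαm hβm
  have hifstep : ∀ j, useq m n α β (j + 1) =
      if 2 * m ≤ sg m α β (useq m n α β j) + 2 * n then 2 * m
      else sg m α β (useq m n α β j) + 2 * n := fun j => rfl
  -- upper bound on the number of blocks
  have hub : ∀ j, sg m α β (useq m n α β j) ≤ j * (2 * n) := by
    intro j
    induction j with
    | zero => omega
    | succ j ih =>
      have h1 := hsgle (useq m n α β (j+1))
      have h2 := hifstep j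
      have h3 : (j + 1) * (2 * n) = j * (2 * n) + 2 * n := by ring
      split_ifs at h2 with hc
      · omega
      · omega
  have hkr : k ≤ r := by
    have h1 : 2 * m ≤ r * (2 * n) := by
      have := hub r
      omega
    have h2 : r * (2 * n) = (2 * r) * n := by ring
    have h3 : 2 * m = (2 * k) * n := by rw [hm]; ring
    have h4 : (2 * k) * n ≤ (2 * r) * n := by omega
    have h5 : 2 * k ≤ 2 * r := Nat.le_of_mul_le_mul_right h4 (by omega)
    omega
  -- lower bound facts
  have hlowf : ∀ j, j < r → j * (2 * n - 1) ≤ sg m α β (useq m n α β j) ∧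
      sg m α β (useq m n α β j) < 2 * m := by
    intro j
    induction j with
    | zero => intro _; omega
    | succ j ih =>
      intro hj
      have ihh := ih (by omega)
      have h2 := hifstep j
      have hne := hpre (j+1) hj
      have h4 := hsgge (useq m n α β (j+1)) (hu2m (j+1))
      have h5 := hsgle (useq m n α β (j+1))
      have h3 : (j + 1) * (2 * n - 1) = j * (2 * n - 1) + (2 * n - 1) := by ring
      split_ifs at h2 with hc
      · omega
      · omega
  have hceil : r ≤ Nat.ceil ((2 * (k : ℚ) * n) / (2 * (n : ℚ) - 1)) := by
    have hlt : (r - 1) * (2 * n - 1) < 2 * m := by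
      have := hlowf (r - 1) (by omega)
      omega
    have hq : (((r - 1 : ℕ)) : ℚ) < (2 * (k : ℚ) * n) / (2 * (n : ℚ) - 1) := by
      have hpos : (0 : ℚ) < 2 * (n : ℚ) - 1 := by
        have : (1 : ℚ) ≤ (n : ℚ) := by exact_mod_cast hn
        linarith
      rw [lt_div_iff₀ hpos]
      have h1 : ((r - 1) * (2 * n - 1) : ℕ) < 2 * (k * n) := by rw [← hm]; exact hlt
      calc (((r - 1 : ℕ)) : ℚ) * (2 * (n : ℚ) - 1)
          = (((r - 1) * (2 * n - 1) : ℕ) : ℚ) := by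
            rw [Nat.cast_mul, Nat.cast_sub (show (1 : ℕ) ≤ 2 * n by omega)]
            push_cast
            ring
        _ < ((2 * (k * n) : ℕ) : ℚ) := by exact_mod_cast h1
        _ = 2 * (k : ℚ) * n := by push_cast; ring
    have := Nat.lt_ceil.mpr hq
    omega
  -- the partition
  set A : ℕ → ℕ := fun j => a1 m α β (useq m n α β j) with hA
  set B : ℕ → ℕ := fun j => b1 m α β (useq m n α β j) with hB
  have hAdef : ∀ j, a1 m α β (useq m n α β j) = A j := fun _ => rfl
  have hBdef : ∀ j, b1 m α β (useq m n α β j) = B j := fun _ => rfl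
  have hsgAB : ∀ j, A j + B j = sg m α β (useq m n α β j) := fun _ => rfl
  have hAmono : Monotone A := fun j j' h => a1_mono (humono h)
  have hBmono : Monotone B := fun j j' h => b1_mono hα hβ hαm hβm (humono h)
  have hA0 : A 0 = 0 := a1_zero hα hβ
  have hB0 : B 0 = 0 := by
    have h1 := hsgAB 0
    omega
  have hAr : A r = m := by
    have : A r = a1 m α β (2 * m) := by rw [← hur]
    rw [this]
    exact a1_2m hα hβ hαm hβm
  have hBr : B r = m := by
    have h1 := hsgAB r
    omega
  refine ⟨r, hkr, hceil,
    (fun j : Fin (r + 1) => A (j : ℕ) + 1, fun j : Fin (r + 1) => B (j : ℕ) + 1),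
    ⟨?_, ?_, ?_, ?_, ?_, ?_, ?_⟩, ?_⟩
  · intro j j' hj
    have h : (j : ℕ) ≤ (j' : ℕ) := hj
    have := hAmono h
    simp only
    omega
  · intro j j' hj
    have h : (j : ℕ) ≤ (j' : ℕ) := hj
    have := hBmono h
    simp only
    omega
  · simp only [Fin.val_zero]
    omega
  · simp only [Fin.val_zero]
    omega
  · simp only [Fin.val_last]
    omega
  · simp only [Fin.val_last]
    omega
  · -- block conditions
    intro j
    have hsucc : ((j.succ : Fin (r+1)) : ℕ) = (j : ℕ) + 1 := rfl
    have hcast : ((j.castSucc : Fin (r+1)) : ℕ) = (j : ℕ) := rfl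
    have hAm1 := hAmono (show (j : ℕ) ≤ (j : ℕ) + 1 by omega)
    have hBm1 := hBmono (show (j : ℕ) ≤ (j : ℕ) + 1 by omega)
    have e1 := hsgAB (j : ℕ)
    have e2 := hsgAB ((j : ℕ) + 1)
    have h2 := hifstep (j : ℕ)
    have h4 := hsgge (useq m n α β ((j : ℕ)+1)) (hu2m ((j : ℕ)+1))
    have h5 := hsgle (useq m n α β ((j : ℕ)+1))
    constructor
    · intro hjr
      have hne := hpre ((j : ℕ)+1) hjr
      simp only [hsucc, hcast, Set.mem_insert_iff, Set.mem_singleton_iff]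
      split_ifs at h2 with hc
      · omega
      · omega
    · intro hjr
      have hu1 : useq m n α β ((j : ℕ)+1) = 2 * m := by rw [hjr]; exact hur
      have hsg1 : sg m α β (useq m n α β ((j : ℕ)+1)) = 2 * m := by
        rw [hu1]; exact sg_2m hα hβ hαm hβm
      simp only [hsucc, hcast]
      split_ifs at h2 with hc
      · omega
      · omega
  · -- the score inequality
    have hble := blocks_le S δ x y hα hβ hαm hβm A B r hAmono hBmono
      (fun j => a1_le_m _) hA0 hB0 hAr hBr
      (fun j => blo_le_b1 hα hβ hαm hβm _)
      (fun j => min_le_right _ _)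
    refine le_trans hble (le_of_eq ?_)
    rw [← Fin.sum_univ_eq_sum_range
      (fun j => Fsc S δ x y (A (j+1) - A j) (B (j+1) - B j) (A j + 1) (B j + 1)) r]
    apply Finset.sum_congr rfl
    intro j _
    simp only [Fin.val_succ, Fin.coe_castSucc, Nat.add_sub_add_right]

lemma partition_sum_le (S : 𝔸 → 𝔸 → ℝ) (δ : ℝ) (x y : ℕ → 𝔸) (k n r : ℕ)
    (p : (Fin (r + 1) → ℕ) × (Fin (r + 1) → ℕ)) (hp : p ∈ PartSet r k n) :
    ∑ j : Fin r, Fsc S δ x y (p.1 j.succ - p.1 j.castSucc) (p.2 j.succ - p.2 j.castSucc)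
        (p.1 j.castSucc) (p.2 j.castSucc) ≤
      Fsc S δ x y (k * n) (k * n) 1 1 := by
  obtain ⟨hm1, hm2, h01, h02, hl1, hl2, _⟩ := hp
  set νn : ℕ → ℕ := fun j => p.1 ⟨min j r, by omega⟩ with hνn
  set τn : ℕ → ℕ := fun j => p.2 ⟨min j r, by omega⟩ with hτn
  have hνmono : Monotone νn := by
    intro a b hab
    exact hm1 (show (⟨min a r, by omega⟩ : Fin (r+1)) ≤ ⟨min b r, by omega⟩ from by
      simp only [Fin.mk_le_mk]; omega)
  have hτmono : Monotone τn := by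
    intro a b hab
    exact hm2 (show (⟨min a r, by omega⟩ : Fin (r+1)) ≤ ⟨min b r, by omega⟩ from by
      simp only [Fin.mk_le_mk]; omega)
  have hν0 : νn 0 = 1 := by
    have : (⟨min 0 r, by omega⟩ : Fin (r+1)) = 0 := Fin.ext (by simp)
    rw [hνn]
    simp only
    rw [this, h01]
  have hτ0 : τn 0 = 1 := by
    have : (⟨min 0 r, by omega⟩ : Fin (r+1)) = 0 := Fin.ext (by simp)
    rw [hτn]
    simp only
    rw [this, h02]
  have hνr : νn r = k * n + 1 := by
    have : (⟨min r r, by omega⟩ : Fin (r+1)) = Fin.last r := Fin.ext (by simp)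
    rw [hνn]
    simp only
    rw [this, hl1]
  have hτr : τn r = k * n + 1 := by
    have : (⟨min r r, by omega⟩ : Fin (r+1)) = Fin.last r := Fin.ext (by simp)
    rw [hτn]
    simp only
    rw [this, hl2]
  have hsum : ∑ j : Fin r, Fsc S δ x y (p.1 j.succ - p.1 j.castSucc)
      (p.2 j.succ - p.2 j.castSucc) (p.1 j.castSucc) (p.2 j.castSucc) =
      ∑ j ∈ Finset.range r, Fsc S δ x y (νn (j+1) - νn j) (τn (j+1) - τn j)
        (νn j) (τn j) := by
    rw [← Fin.sum_univ_eq_sum_range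
      (fun j => Fsc S δ x y (νn (j+1) - νn j) (τn (j+1) - τn j) (νn j) (τn j)) r]
    apply Finset.sum_congr rfl
    intro j _
    have e1 : (⟨min ((j : ℕ)+1) r, by omega⟩ : Fin (r+1)) = j.succ :=
      Fin.ext (by have := j.isLt; simp only [Fin.val_succ]; omega)
    have e2 : (⟨min (j : ℕ) r, by omega⟩ : Fin (r+1)) = j.castSucc :=
      Fin.ext (by have := j.isLt; simp only [Fin.coe_castSucc]; omega)
    have f1 : νn ((j : ℕ)+1) = p.1 j.succ := by rw [hνn]; simp only; rw [e1]
    have f2 : νn (j : ℕ) = p.1 j.castSucc := by rw [hνn]; simp only; rw [e2]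
    have f3 : τn ((j : ℕ)+1) = p.2 j.succ := by rw [hτn]; simp only; rw [e1]
    have f4 : τn (j : ℕ) = p.2 j.castSucc := by rw [hτn]; simp only; rw [e2]
    rw [f1, f2, f3, f4]
  rw [hsum]
  have hch := chain S δ x y νn τn hνmono hτmono r
  rw [hν0, hτ0, hνr, hτr] at hch
  simpa using hch

end AlignAux

open AlignAux

/-- The optimal alignment score of sequences of length `k·n` equals the maximum over
partitions in `ℬ_{k,n}` of the sum of blockwise optimal scores. -/
theorem alignScore_eq_max_over_partitions
    {𝔸 : Type*} [Fintype 𝔸] [Nonempty 𝔸]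
    (S : 𝔸 → 𝔸 → ℝ) (hsymm : ∀ a b, S a b = S b a) (hpos : ∀ a b, 0 ≤ S a b)
    (δ : ℝ) (hδ : δ ≤ ⨆ a, ⨆ b, S a b)
    (k n : ℕ) (hk : 1 ≤ k) (hn : 1 ≤ n) (x y : ℕ → 𝔸) :
    alignScore S δ (fun i : Fin (k * n) => x ((i : ℕ) + 1))
        (fun i : Fin (k * n) => y ((i : ℕ) + 1)) =
      sSup {s : ℝ | ∃ r : ℕ, k ≤ r ∧
        r ≤ Nat.ceil ((2 * (k : ℚ) * n) / (2 * (n : ℚ) - 1)) ∧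
        ∃ p ∈ PartSet r k n,
          s = ∑ j : Fin r, alignScore2 S δ
            (fun i : Fin (p.1 j.succ - p.1 j.castSucc) => x (p.1 j.castSucc + (i : ℕ)))
            (fun i : Fin (p.2 j.succ - p.2 j.castSucc) => y (p.2 j.castSucc + (i : ℕ)))} := by
  classical
  set m := k * n with hm
  -- identify the left-hand side with `Fsc`
  have hx : (fun i : Fin m => x ((i : ℕ) + 1)) = (fun i : Fin m => x (1 + (i : ℕ))) := by
    funext i; rw [add_comm]
  have hy : (fun i : Fin m => y ((i : ℕ) + 1)) = (fun i : Fin m => y (1 + (i : ℕ))) := by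
    funext i; rw [add_comm]
  have hLft : alignScore S δ (fun i : Fin m => x ((i : ℕ) + 1))
      (fun i : Fin m => y ((i : ℕ) + 1)) = Fsc S δ x y m m 1 1 := by
    rw [alignScore_eq_alignScore2, hx, hy]
    rfl
  rw [hLft]
  -- every partition sum is at most the global score
  have key1 : ∀ t ∈ {s : ℝ | ∃ r : ℕ, k ≤ r ∧
      r ≤ Nat.ceil ((2 * (k : ℚ) * n) / (2 * (n : ℚ) - 1)) ∧
      ∃ p ∈ PartSet r k n,
        s = ∑ j : Fin r, alignScore2 S δ
          (fun i : Fin (p.1 j.succ - p.1 j.castSucc) => x (p.1 j.castSucc + (i : ℕ)))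
          (fun i : Fin (p.2 j.succ - p.2 j.castSucc) => y (p.2 j.castSucc + (i : ℕ)))},
      t ≤ Fsc S δ x y m m 1 1 := by
    rintro t ⟨r, hkr, hrceil, p, hp, rfl⟩
    exact partition_sum_le S δ x y k n r p hp
  have hBdd : BddAbove {s : ℝ | ∃ r : ℕ, k ≤ r ∧
      r ≤ Nat.ceil ((2 * (k : ℚ) * n) / (2 * (n : ℚ) - 1)) ∧
      ∃ p ∈ PartSet r k n,
        s = ∑ j : Fin r, alignScore2 S δ
          (fun i : Fin (p.1 j.succ - p.1 j.castSucc) => x (p.1 j.castSucc + (i : ℕ)))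
          (fun i : Fin (p.2 j.succ - p.2 j.castSucc) => y (p.2 j.castSucc + (i : ℕ)))} :=
    ⟨Fsc S δ x y m m 1 1, key1⟩
  -- the global score is nonnegative
  have key0 : 0 ≤ Fsc S δ x y m m 1 1 := by
    have h1 : ((∑ i : Fin m, S ((fun i : Fin m => x (1 + (i : ℕ))) i)
          ((fun i : Fin m => y (1 + (i : ℕ))) i)) +
        δ * ((((m : ℝ) - (m : ℝ)) + ((m : ℝ) - (m : ℝ))) / 2)) ∈
        ASet S δ (fun i : Fin m => x (1 + (i : ℕ))) (fun i : Fin m => y (1 + (i : ℕ))) :=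
      ⟨m, (fun i => i), (fun i => i), strictMono_id, strictMono_id, rfl⟩
    have h2 := mem_ASet_le h1
    have h3 : (0:ℝ) ≤ (∑ i : Fin m, S ((fun i : Fin m => x (1 + (i : ℕ))) i)
          ((fun i : Fin m => y (1 + (i : ℕ))) i)) +
        δ * ((((m : ℝ) - (m : ℝ)) + ((m : ℝ) - (m : ℝ))) / 2) := by
      have h4 : (0:ℝ) ≤ ∑ i : Fin m, S ((fun i : Fin m => x (1 + (i : ℕ))) i)
          ((fun i : Fin m => y (1 + (i : ℕ))) i) :=
        Finset.sum_nonneg (fun i _ => hpos _ _)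
      have h5 : δ * ((((m : ℝ) - (m : ℝ)) + ((m : ℝ) - (m : ℝ))) / 2) = 0 := by ring
      linarith
    exact le_trans h3 h2
  apply le_antisymm
  · -- the hard direction: split the optimal alignment along a partition
    refine csSup_le (ASet_nonempty S δ (fun i : Fin m => x (1 + (i : ℕ)))
      (fun i : Fin m => y (1 + (i : ℕ)))) ?_
    rintro sc ⟨K, al, mu, hal, hmu, rfl⟩
    have hKm : K ≤ m := by
      simpa using Fintype.card_le_of_injective al hal.injective
    set α : ℕ → ℕ := fun i => if h : i < K then ((al ⟨i, h⟩ : ℕ)) else m + i with hαdef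
    set β : ℕ → ℕ := fun i => if h : i < K then ((mu ⟨i, h⟩ : ℕ)) else m + i with hβdef
    have hαsm : StrictMono α := by
      intro i j hij
      simp only [hαdef]
      split_ifs with h1 h2 h2
      · exact hal (show (⟨i, h1⟩ : Fin K) < ⟨j, h2⟩ from hij)
      · have := (al ⟨i, h1⟩).isLt; omega
      · omega
      · omega
    have hβsm : StrictMono β := by
      intro i j hij
      simp only [hβdef]
      split_ifs with h1 h2 h2
      · exact hmu (show (⟨i, h1⟩ : Fin K) < ⟨j, h2⟩ from hij)
      · have := (mu ⟨i, h1⟩).isLt; omega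
      · omega
      · omega
    have hαm : ∀ i, α i < m ↔ i < K := by
      intro i
      simp only [hαdef]
      split_ifs with h
      · exact iff_of_true (al ⟨i, h⟩).isLt h
      · omega
    have hβm : ∀ i, β i < m ↔ i < K := by
      intro i
      simp only [hβdef]
      split_ifs with h
      · exact iff_of_true (mu ⟨i, h⟩).isLt h
      · omega
    have hsc : (∑ i : Fin K, S ((fun i : Fin m => x (1 + (i : ℕ))) (al i))
          ((fun i : Fin m => y (1 + (i : ℕ))) (mu i))) =
        ∑ i ∈ Finset.range K, (if i < K then S (x (1 + α i)) (y (1 + β i)) else 0) := by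
      rw [← Fin.sum_univ_eq_sum_range
        (fun i => if i < K then S (x (1 + α i)) (y (1 + β i)) else 0) K]
      apply Finset.sum_congr rfl
      intro i _
      rw [if_pos i.isLt]
      have hv1 : α (i : ℕ) = ((al i : ℕ)) := by
        simp only [hαdef]
        rw [dif_pos i.isLt, Fin.eta]
      have hv2 : β (i : ℕ) = ((mu i : ℕ)) := by
        simp only [hβdef]
        rw [dif_pos i.isLt, Fin.eta]
      rw [hv1, hv2]
    obtain ⟨r, h1, h2, p, hp, hle⟩ :=
      exists_partition S δ x y k n K hk hn hαsm hβsm hαm hβm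
    have hmem : (∑ j : Fin r, Fsc S δ x y (p.1 j.succ - p.1 j.castSucc)
        (p.2 j.succ - p.2 j.castSucc) (p.1 j.castSucc) (p.2 j.castSucc)) ∈
        {s : ℝ | ∃ r : ℕ, k ≤ r ∧
          r ≤ Nat.ceil ((2 * (k : ℚ) * n) / (2 * (n : ℚ) - 1)) ∧
          ∃ p ∈ PartSet r k n,
            s = ∑ j : Fin r, alignScore2 S δ
              (fun i : Fin (p.1 j.succ - p.1 j.castSucc) => x (p.1 j.castSucc + (i : ℕ)))
              (fun i : Fin (p.2 j.succ - p.2 j.castSucc) => y (p.2 j.castSucc + (i : ℕ)))} :=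
      ⟨r, h1, h2, p, hp, rfl⟩
    calc (∑ i : Fin K, S ((fun i : Fin m => x (1 + (i : ℕ))) (al i))
          ((fun i : Fin m => y (1 + (i : ℕ))) (mu i))) +
        δ * ((((m : ℝ) - (K : ℝ)) + ((m : ℝ) - (K : ℝ))) / 2)
        ≤ ∑ j : Fin r, Fsc S δ x y (p.1 j.succ - p.1 j.castSucc)
            (p.2 j.succ - p.2 j.castSucc) (p.1 j.castSucc) (p.2 j.castSucc) := by
          rw [hsc]
          exact hle
      _ ≤ _ := le_csSup hBdd hmem
  · exact Real.sSup_le key1 key0
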